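/- For every integer k ≥ 1 and every real x with 0 ≤ x < 1, one has (1 - x)^{2k-1} ∑_{r=0}^∞ C(k+r-1, r)² x^r = ∑_{r=0}^{k-1} C(k-1, r)² x^r. In particular, taking x = 1/p at each prime p, the coefficient a_k = ∏_p ( (1 - 1/p)^{k²} ∑_{r=0}^∞ d_k(p^r)² p^{-r} ) equals ∏_p ( (1 - 1/p)^{(k-1)²} ∑_{r=0}^{k-1} C(k-1, r)² p^{-r} ). -/

import Mathlib

/-- The `k`-th divisor function `d_k`, the `k`-fold Dirichlet convolution of the
constant function `1`. -/
noncomputable def dk (k : ℕ) : ArithmeticFunction ℕ := ArithmeticFunction.zeta ^ k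

/-- The arithmetic factor `a_k = ∏_p (1 - 1/p)^{k²} ∑_{r=0}^∞ d_k(p^r)² p^{-r}`. -/
noncomputable def aCG (k : ℕ) : ℝ :=
  ∏' p : Nat.Primes, ((1 - 1 / (p : ℝ)) ^ (k ^ 2) *
    ∑' r : ℕ, (dk k ((p : ℕ) ^ r) : ℝ) ^ 2 / (p : ℝ) ^ r)

open Finset

namespace AGaux

lemma h1 (m r b : ℕ) :
    m.choose r * (m - r).choose b = m.choose (r + b) * (r + b).choose r := by
  rcases le_or_gt r m with h | h
  · by_cases hb : r + b ≤ m
    · have := Nat.choose_mul (n := m) (k := r + b) (s := r) (Nat.le_add_right r b)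
      simpa [Nat.add_sub_cancel_left] using this.symm
    · rw [Nat.choose_eq_zero_of_lt (by omega : m - r < b),
        Nat.choose_eq_zero_of_lt (by omega : m < r + b)]
      simp
  · rw [Nat.choose_eq_zero_of_lt h, Nat.choose_eq_zero_of_lt (by omega : m < r + b)]
    simp

lemma h2 (N a m : ℕ) (h : a + m ≤ N) :
    N.choose a * (N - a).choose m = N.choose m * (N - m).choose a := by
  have e1 := Nat.choose_mul (n := N) (k := a + m) (s := a) (Nat.le_add_right a m)
  have e2 := Nat.choose_mul (n := N) (k := a + m) (s := m) (Nat.le_add_left m a)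
  have hsymm : (a + m).choose a = (a + m).choose m := Nat.choose_symm_add
  simp only [Nat.add_sub_cancel_left, Nat.add_sub_cancel] at e1 e2
  rw [← e1, ← e2, hsymm]

lemma hockey (j n : ℕ) : ∑ i ∈ range (n + 1), (j + i).choose i = (j + 1 + n).choose n := by
  induction n with
  | zero => simp
  | succ n ih =>
    rw [Finset.sum_range_succ, ih, show j + (n + 1) = j + 1 + n by omega,
      show j + 1 + (n + 1) = (j + 1 + n) + 1 by omega, Nat.choose_succ_succ' (j + 1 + n) n]

lemma term_eq (m n r s : ℕ) (hrs : r + s = n) :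
    m.choose r ^ 2 * (2 * m + s).choose s =
    ∑ a ∈ range (n + 1),
      (m + n).choose a * (m.choose (n - a) * ((n - a).choose r * m.choose r)) := by
  rcases le_or_gt r m with h | h
  · have h2' : 2 * m + s = (m + n) + (m - r) := by omega
    rw [h2', Nat.add_choose_eq, Finset.mul_sum]
    rw [Finset.Nat.sum_antidiagonal_eq_sum_range_succ
      (fun a b => m.choose r ^ 2 * ((m + n).choose a * (m - r).choose b)) s]
    rw [← Finset.sum_subset (Finset.range_subset_range.2 (by omega : s + 1 ≤ n + 1))]
    · apply Finset.sum_congr rfl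
      intro a ha
      rw [Finset.mem_range] at ha
      have hab : r + (s - a) = n - a := by omega
      have := h1 m r (s - a)
      rw [hab] at this
      calc m.choose r ^ 2 * ((m + n).choose a * (m - r).choose (s - a))
          = (m + n).choose a * ((m.choose r * (m - r).choose (s - a)) * m.choose r) := by ring
        _ = (m + n).choose a * (m.choose (n - a) * ((n - a).choose r * m.choose r)) := by
            rw [this]; ring
    · intro a ha hna
      rw [Finset.mem_range] at ha
      rw [Finset.mem_range, not_lt] at hna
      rw [Nat.choose_eq_zero_of_lt (by omega : n - a < r)]
      ring
  · rw [Nat.choose_eq_zero_of_lt h]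
    simp [Nat.choose_eq_zero_of_lt h]

lemma vand2 (d m n : ℕ) (hd : d ≤ n) :
    ∑ r ∈ range (n + 1), d.choose r * m.choose r = (d + m).choose d := by
  rw [Nat.add_choose_eq,
    Finset.Nat.sum_antidiagonal_eq_sum_range_succ (fun u v => d.choose u * m.choose v) d]
  rw [← Finset.sum_range_reflect (fun u => d.choose u * m.choose (d - u)) (d + 1)]
  rw [← Finset.sum_subset (Finset.range_subset_range.2 (by omega : d + 1 ≤ n + 1))]
  · apply Finset.sum_congr rfl
    intro u hu
    rw [Finset.mem_range] at hu
    have h1 : d + 1 - 1 - u = d - u := by omega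
    have h2 : d - (d - u) = u := by omega
    rw [h1, h2, Nat.choose_symm (by omega : u ≤ d)]
  · intro u hu hnu
    rw [Finset.mem_range, not_lt] at hnu
    rw [Nat.choose_eq_zero_of_lt (by omega : d < u), zero_mul]

lemma key (m n : ℕ) :
    ∑ rs ∈ Finset.HasAntidiagonal.antidiagonal n, m.choose rs.1 ^ 2 * (2 * m + rs.2).choose rs.2 =
      (m + n).choose n ^ 2 := by
  rw [Finset.Nat.sum_antidiagonal_eq_sum_range_succ
    (fun r s => m.choose r ^ 2 * (2 * m + s).choose s) n]
  have step1 : ∀ r ∈ range (n + 1),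
      m.choose r ^ 2 * (2 * m + (n - r)).choose (n - r) =
      ∑ a ∈ range (n + 1),
        (m + n).choose a * (m.choose (n - a) * ((n - a).choose r * m.choose r)) := by
    intro r hr
    rw [Finset.mem_range] at hr
    exact term_eq m n r (n - r) (by omega)
  rw [Finset.sum_congr rfl step1, Finset.sum_comm]
  have step2 : ∀ a ∈ range (n + 1),
      ∑ r ∈ range (n + 1),
        (m + n).choose a * (m.choose (n - a) * ((n - a).choose r * m.choose r)) =
      (m + n).choose m * (n.choose a * m.choose (n - a)) := by
    intro a ha
    rw [Finset.mem_range] at ha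
    have : ∑ r ∈ range (n + 1),
        (m + n).choose a * (m.choose (n - a) * ((n - a).choose r * m.choose r)) =
        ((m + n).choose a * m.choose (n - a)) *
          ∑ r ∈ range (n + 1), (n - a).choose r * m.choose r := by
      rw [Finset.mul_sum]; apply Finset.sum_congr rfl; intro r _; ring
    rw [this, vand2 (n - a) m n (by omega)]
    have e1 : ((n - a) + m).choose (n - a) = ((n - a) + m).choose m := Nat.choose_symm_add
    have e2 : (n - a) + m = (m + n) - a := by omega
    rw [e1, e2]
    have e3 := h2 (m + n) a m (by omega)
    have e4 : (m + n) - m = n := by omega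
    rw [e4] at e3
    calc (m + n).choose a * m.choose (n - a) * ((m + n - a)).choose m
        = ((m + n).choose a * (m + n - a).choose m) * m.choose (n - a) := by ring
      _ = ((m + n).choose m * n.choose a) * m.choose (n - a) := by rw [e3]
      _ = (m + n).choose m * (n.choose a * m.choose (n - a)) := by ring
  rw [Finset.sum_congr rfl step2, ← Finset.mul_sum]
  have vdm : ∑ a ∈ range (n + 1), n.choose a * m.choose (n - a) = (n + m).choose n := by
    rw [Nat.add_choose_eq,
      Finset.Nat.sum_antidiagonal_eq_sum_range_succ (fun a b => n.choose a * m.choose b) n]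
  rw [vdm, show n + m = m + n by omega, sq]
  congr 1
  exact Nat.choose_symm_add

lemma summable_poly_geom (c : ℕ) {x : ℝ} (h0 : 0 ≤ x) (h1 : x < 1) :
    Summable (fun r : ℕ => ((r : ℝ) + 1) ^ c * x ^ r) := by
  rcases eq_or_lt_of_le h0 with rfl | hx
  · apply summable_of_ne_finset_zero (s := {0})
    intro r hr
    have : r ≠ 0 := by simpa using hr
    simp [zero_pow this]
  · have S : Summable (fun n : ℕ => (n : ℝ) ^ c * x ^ n) :=
      summable_pow_mul_geometric_of_norm_lt_one c (by rwa [Real.norm_of_nonneg h0])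
    have S1 : Summable (fun n : ℕ => ((n : ℝ) + 1) ^ c * x ^ (n + 1)) := by
      have := (summable_nat_add_iff 1).2 S
      apply this.congr
      intro n
      push_cast
      ring
    have S2 := S1.mul_right x⁻¹
    apply S2.congr
    intro n
    rw [pow_succ]
    field_simp

lemma choose_bound (j r : ℕ) : ((j + r).choose r : ℝ) ≤ ((j : ℝ) + 1) ^ j * ((r : ℝ) + 1) ^ j := by
  have e1 : (j + r).choose r = (j + r).choose j := (Nat.choose_symm_add).symm
  have e2 : (j + r).choose j ≤ (j + r) ^ j := Nat.choose_le_pow _ _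
  have e3 : (j + r) ^ j ≤ ((j + 1) * (r + 1)) ^ j :=
    Nat.pow_le_pow_left (by nlinarith) j
  calc ((j + r).choose r : ℝ) ≤ (((j + 1) * (r + 1)) ^ j : ℕ) := by
        exact_mod_cast le_trans (e1 ▸ e2) e3
    _ = (((j : ℝ) + 1) * ((r : ℝ) + 1)) ^ j := by push_cast; ring
    _ = ((j : ℝ) + 1) ^ j * ((r : ℝ) + 1) ^ j := mul_pow _ _ _

lemma summable1 (j : ℕ) {x : ℝ} (h0 : 0 ≤ x) (h1 : x < 1) :
    Summable (fun r : ℕ => ((j + r).choose r : ℝ) * x ^ r) := by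
  refine Summable.of_nonneg_of_le
    (f := fun r : ℕ => ((j : ℝ) + 1) ^ j * (((r : ℝ) + 1) ^ j * x ^ r))
    (fun r => by positivity) (fun r => ?_)
    ((summable_poly_geom j h0 h1).mul_left _)
  have := mul_le_mul_of_nonneg_right (choose_bound j r) (pow_nonneg h0 r)
  calc ((j + r).choose r : ℝ) * x ^ r
      ≤ ((j : ℝ) + 1) ^ j * ((r : ℝ) + 1) ^ j * x ^ r := this
    _ = ((j : ℝ) + 1) ^ j * (((r : ℝ) + 1) ^ j * x ^ r) := by ring

lemma norm_summable1 (j : ℕ) {x : ℝ} (h0 : 0 ≤ x) (h1 : x < 1) :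
    Summable (fun r : ℕ => ‖((j + r).choose r : ℝ) * x ^ r‖) := by
  apply (summable1 j h0 h1).congr
  intro r
  rw [Real.norm_of_nonneg (by positivity)]

lemma hasSum_negbinom (j : ℕ) {x : ℝ} (h0 : 0 ≤ x) (h1 : x < 1) :
    HasSum (fun r : ℕ => ((j + r).choose r : ℝ) * x ^ r) (((1 - x)⁻¹) ^ (j + 1)) := by
  induction j with
  | zero =>
    simpa [Nat.choose_self] using hasSum_geometric_of_lt_one h0 h1
  | succ j ih =>
    have hg : Summable (fun r : ℕ => ‖x ^ r‖) := by
      apply (summable_geometric_of_lt_one h0 h1).congr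
      intro r
      rw [Real.norm_of_nonneg (by positivity)]
    have cp := tsum_mul_tsum_eq_tsum_sum_antidiagonal_of_summable_norm
      (f := fun r : ℕ => ((j + r).choose r : ℝ) * x ^ r) (g := fun r : ℕ => x ^ r)
      (norm_summable1 j h0 h1) hg
    have hper : ∀ n : ℕ,
        (∑ kl ∈ Finset.HasAntidiagonal.antidiagonal n, (((j + kl.1).choose kl.1 : ℝ) * x ^ kl.1) * x ^ kl.2) =
        ((j + 1 + n).choose n : ℝ) * x ^ n := by
      intro n
      have e1 : ∀ kl ∈ Finset.HasAntidiagonal.antidiagonal n,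
          (((j + kl.1).choose kl.1 : ℝ) * x ^ kl.1) * x ^ kl.2 =
          ((j + kl.1).choose kl.1 : ℝ) * x ^ n := by
        intro kl hkl
        rw [Finset.HasAntidiagonal.mem_antidiagonal] at hkl
        rw [mul_assoc, ← pow_add, hkl]
      rw [Finset.sum_congr rfl e1, ← Finset.sum_mul, ← Nat.cast_sum]
      congr 2
      rw [Finset.Nat.sum_antidiagonal_eq_sum_range_succ (fun a b => (j + a).choose a) n]
      exact hockey j n
    rw [ih.tsum_eq, (hasSum_geometric_of_lt_one h0 h1).tsum_eq] at cp
    rw [tsum_congr hper] at cp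
    have hs := summable1 (j + 1) h0 h1
    rw [hs.hasSum_iff, ← cp, pow_succ]
    ring

lemma part1 (m : ℕ) {x : ℝ} (h0 : 0 ≤ x) (h1 : x < 1) :
    (1 - x) ^ (2 * m + 1) * ∑' r : ℕ, ((m + r).choose r : ℝ) ^ 2 * x ^ r =
      ∑ r ∈ Finset.range (m + 1), (m.choose r : ℝ) ^ 2 * x ^ r := by
  have hPzero : ∀ r ∉ Finset.range (m + 1), ((m.choose r : ℝ)) ^ 2 * x ^ r = 0 := by
    intro r hr
    rw [Finset.mem_range, not_lt] at hr
    rw [Nat.choose_eq_zero_of_lt (by omega : m < r)]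
    simp
  have hPn : Summable (fun r : ℕ => ‖((m.choose r : ℝ)) ^ 2 * x ^ r‖) := by
    apply (summable_of_ne_finset_zero hPzero).congr
    intro r
    rw [Real.norm_of_nonneg (by positivity)]
  have cp := tsum_mul_tsum_eq_tsum_sum_antidiagonal_of_summable_norm
    (f := fun r : ℕ => ((m.choose r : ℝ)) ^ 2 * x ^ r)
    (g := fun r : ℕ => ((2 * m + r).choose r : ℝ) * x ^ r)
    hPn (norm_summable1 (2 * m) h0 h1)
  have hper : ∀ n : ℕ,
      (∑ kl ∈ Finset.HasAntidiagonal.antidiagonal n,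
        (((m.choose kl.1 : ℝ)) ^ 2 * x ^ kl.1) * (((2 * m + kl.2).choose kl.2 : ℝ) * x ^ kl.2)) =
      ((m + n).choose n : ℝ) ^ 2 * x ^ n := by
    intro n
    have e1 : ∀ kl ∈ Finset.HasAntidiagonal.antidiagonal n,
        (((m.choose kl.1 : ℝ)) ^ 2 * x ^ kl.1) * (((2 * m + kl.2).choose kl.2 : ℝ) * x ^ kl.2) =
        (((m.choose kl.1 ^ 2 * (2 * m + kl.2).choose kl.2 : ℕ) : ℝ)) * x ^ n := by
      intro kl hkl
      rw [Finset.HasAntidiagonal.mem_antidiagonal] at hkl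
      push_cast
      rw [← hkl]
      ring
    rw [Finset.sum_congr rfl e1, ← Finset.sum_mul, ← Nat.cast_sum, key m n]
    push_cast
    ring
  rw [tsum_congr hper] at cp
  rw [(hasSum_negbinom (2 * m) h0 h1).tsum_eq] at cp
  have hone : (1 - x) ^ (2 * m + 1) * ((1 - x)⁻¹) ^ (2 * m + 1) = 1 := by
    rw [← mul_pow, mul_inv_cancel₀ (by intro h; rw [sub_eq_zero] at h; exact absurd h.symm (ne_of_lt h1)), one_pow]
  calc (1 - x) ^ (2 * m + 1) * ∑' r : ℕ, ((m + r).choose r : ℝ) ^ 2 * x ^ r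
      = (1 - x) ^ (2 * m + 1) *
        ((∑' r : ℕ, ((m.choose r : ℝ)) ^ 2 * x ^ r) * ((1 - x)⁻¹) ^ (2 * m + 1)) := by
        rw [← cp]
    _ = ((1 - x) ^ (2 * m + 1) * ((1 - x)⁻¹) ^ (2 * m + 1)) *
        ∑' r : ℕ, ((m.choose r : ℝ)) ^ 2 * x ^ r := by ring
    _ = ∑' r : ℕ, ((m.choose r : ℝ)) ^ 2 * x ^ r := by rw [hone, one_mul]
    _ = ∑ r ∈ Finset.range (m + 1), (m.choose r : ℝ) ^ 2 * x ^ r := tsum_eq_sum hPzero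

lemma dk_prime_pow (j : ℕ) {p : ℕ} (hp : p.Prime) :
    ∀ r : ℕ, dk (j + 1) (p ^ r) = (j + r).choose r := by
  induction j with
  | zero =>
    intro r
    have hne : p ^ r ≠ 0 := pow_ne_zero r hp.pos.ne'
    simp [dk, pow_one, ArithmeticFunction.zeta_apply, hne, hp.ne_zero]
  | succ j ih =>
    intro r
    have hmul : dk (j + 1 + 1) = dk (j + 1) * ArithmeticFunction.zeta := by
      rw [dk, dk, pow_succ]
    rw [hmul, ArithmeticFunction.mul_zeta_apply, Nat.sum_divisors_prime_pow hp]
    rw [Finset.sum_congr rfl (fun i _ => ih i)]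
    exact hockey j r

lemma factor_eq (m : ℕ) (p : Nat.Primes) :
    (1 - 1 / (p : ℝ)) ^ ((m + 1) ^ 2) *
        ∑' r : ℕ, (dk (m + 1) ((p : ℕ) ^ r) : ℝ) ^ 2 / (p : ℝ) ^ r =
      (1 - 1 / (p : ℝ)) ^ (m ^ 2) *
        ∑ r ∈ Finset.range (m + 1), (m.choose r : ℝ) ^ 2 / (p : ℝ) ^ r := by
  have hp2 : 2 ≤ (p : ℕ) := p.2.two_le
  have hppos : (0 : ℝ) < (p : ℝ) := by exact_mod_cast Nat.lt_of_lt_of_le Nat.zero_lt_two hp2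
  set x : ℝ := 1 / (p : ℝ) with hxdef
  have h0 : 0 ≤ x := by positivity
  have h1 : x < 1 := by
    rw [hxdef, div_lt_one hppos]
    exact_mod_cast Nat.lt_of_lt_of_le Nat.one_lt_two hp2
  have hxr : ∀ r : ℕ, x ^ r = ((p : ℝ) ^ r)⁻¹ := by
    intro r
    rw [hxdef, one_div, inv_pow]
  have htsum : (∑' r : ℕ, (dk (m + 1) ((p : ℕ) ^ r) : ℝ) ^ 2 / (p : ℝ) ^ r) =
      ∑' r : ℕ, ((m + r).choose r : ℝ) ^ 2 * x ^ r := by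
    apply tsum_congr
    intro r
    rw [dk_prime_pow m p.2 r, hxr r, div_eq_mul_inv]
  have hsq : (m + 1) ^ 2 = m ^ 2 + (2 * m + 1) := by ring
  rw [htsum, hsq, pow_add, mul_assoc, part1 m h0 h1]
  congr 1
  apply Finset.sum_congr rfl
  intro r _
  rw [hxr r, div_eq_mul_inv]

end AGaux

/-- For `k ≥ 1` and `0 ≤ x < 1`:
`(1 - x)^{2k-1} ∑_{r=0}^∞ C(k+r-1,r)² x^r = ∑_{r=0}^{k-1} C(k-1,r)² x^r`,
and consequently `a_k = ∏_p (1 - 1/p)^{(k-1)²} ∑_{r=0}^{k-1} C(k-1,r)² p^{-r}`. -/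
theorem aCG_eq_finite_product (k : ℕ) (hk : 1 ≤ k) :
    (∀ x : ℝ, 0 ≤ x → x < 1 →
      (1 - x) ^ (2 * k - 1) * ∑' r : ℕ, ((k + r - 1).choose r : ℝ) ^ 2 * x ^ r =
        ∑ r ∈ Finset.range k, ((k - 1).choose r : ℝ) ^ 2 * x ^ r) ∧
    aCG k = ∏' p : Nat.Primes,
      ((1 - 1 / (p : ℝ)) ^ ((k - 1) ^ 2) *
        ∑ r ∈ Finset.range k, ((k - 1).choose r : ℝ) ^ 2 / (p : ℝ) ^ r) := by
  obtain ⟨m, rfl⟩ : ∃ m, k = m + 1 := ⟨k - 1, by omega⟩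
  have hm1 : m + 1 - 1 = m := by omega
  constructor
  · intro x h0 h1
    have e1 : (2 * (m + 1) - 1) = 2 * m + 1 := by omega
    have e2 : (∑' r : ℕ, ((m + 1 + r - 1).choose r : ℝ) ^ 2 * x ^ r) =
        ∑' r : ℕ, ((m + r).choose r : ℝ) ^ 2 * x ^ r := by
      apply tsum_congr
      intro r
      rw [show m + 1 + r - 1 = m + r by omega]
    rw [e1, e2, hm1]
    exact AGaux.part1 m h0 h1
  · rw [aCG]
    apply tprod_congr
    intro p
    rw [hm1]
    exact AGaux.factor_eq m p
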